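/- arXiv:1403.5763 — 3 statements merged into one kernel-verified Lean document; each statement's English description precedes it below -/
import Mathlib

section
/- If forking in T has the symmetry property (i.e., tp(c̄/Ab̄) forks over A iff tp(b̄/Ac̄) forks over A for all finite tuples b̄, c̄ and sets A), then forking has dual finite character. -/
universe u v w

open FirstOrder FirstOrder.Language Set

variable {L : FirstOrder.Language.{u, v}} {M : Type w} [L.Structure M]

/-- `c` and `c'` have the same type over the parameter set `A`. -/
def SameTypeOver (A : Set M) {n : ℕ} (c c' : Fin n → M) : Prop :=
  ∀ φ : (L[[A]]).Formula (Fin n), φ.Realize c ↔ φ.Realize c'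

/-- The sequence `b` (of `d`-tuples) is indiscernible over `A`. -/
def IndiscernibleOver (A : Set M) {I : Type*} [LinearOrder I] {d : ℕ}
    (b : I → Fin d → M) : Prop :=
  ∀ (n : ℕ) (i j : Fin n → I), StrictMono i → StrictMono j →
    ∀ φ : (L[[A]]).Formula (Fin n × Fin d),
      φ.Realize (fun p => b (i p.1) p.2) ↔ φ.Realize (fun p => b (j p.1) p.2)

/-- The conclusion of the Tent–Ziegler EM-extraction lemma: every finite subtype (over `A`)
of the type of an increasing tuple from `b` is realized by an increasing tuple from `a`. -/
def LocallyBased (A : Set M) {I : Type*} [LinearOrder I] {d : ℕ}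
    (b : I → Fin d → M) (a : ℕ → Fin d → M) : Prop :=
  ∀ (n : ℕ) (i : Fin n → I), StrictMono i →
    ∀ s : Finset ((L[[A]]).Formula (Fin n × Fin d)),
      (∀ φ ∈ s, φ.Realize (fun p => b (i p.1) p.2)) →
      ∃ j : Fin n → ℕ, StrictMono j ∧ ∀ φ ∈ s, φ.Realize (fun p => a (j p.1) p.2)

/-- Dual finite character for an abstract forking relation `Forks c B A` = "tp(c/B) forks
over A". -/
def HasDFC (Forks : ∀ {n : ℕ}, (Fin n → M) → Set M → Set M → Prop) : Prop :=
  ∀ (A : Set M) {n m : ℕ} (c : Fin n → M) (b : Fin m → M),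
    Forks c (A ∪ range b) A →
    ∃ φ : (L[[A]]).Formula (Fin n ⊕ Fin m),
      φ.Realize (Sum.elim c b) ∧
      ∀ b' : Fin m → M, φ.Realize (Sum.elim c b') → Forks c (A ∪ range b') A

/-- if forking has the symmetry property (and forking is witnessed by
formulas), then forking has dual finite character. -/
theorem symmetry_implies_dfc
    (Forks : ∀ {n : ℕ}, (Fin n → M) → Set M → Set M → Prop)
    (hsym : ∀ (A : Set M) {n m : ℕ} (c : Fin n → M) (b : Fin m → M),
      Forks c (A ∪ range b) A ↔ Forks b (A ∪ range c) A)
    (hwitness : ∀ (A : Set M) {m n : ℕ} (b : Fin m → M) (c : Fin n → M),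
      Forks b (A ∪ range c) A →
      ∃ ψ : (L[[A]]).Formula (Fin m ⊕ Fin n),
        ψ.Realize (Sum.elim b c) ∧
        ∀ b' : Fin m → M, ψ.Realize (Sum.elim b' c) → Forks b' (A ∪ range c) A) :
    HasDFC (L := L) (M := M) Forks := by
  intro A n m c b hfork
  obtain ⟨ψ, hψ, hψ'⟩ := hwitness A b c ((hsym A c b).mp hfork)
  refine ⟨ψ.relabel Sum.swap, ?_, ?_⟩
  · rw [Formula.realize_relabel]
    convert hψ using 2
    funext x; cases x <;> rfl
  · intro b' hb'
    rw [Formula.realize_relabel] at hb'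
    refine (hsym A c b').mpr (hψ' b' ?_)
    convert hb' using 2
    funext x; cases x <;> rfl
end

section
/- If forking has weak dual finite character, then T is simple. Equivalently: if T is not simple, then weak DFC fails, witnessed by a model M and tuples b̄, c̄ where tp(b̄/Mc̄) is finitely satisfiable in M but tp(c̄/Mb̄) divides over M. -/
universe u v w

open FirstOrder FirstOrder.Language Set

variable {L : FirstOrder.Language.{u, v}} {M : Type w} [L.Structure M]

/-- `tp(c / s ∪ b)` is finitely satisfiable in `s`: every formula over `s` satisfied by
`(c, b)` is satisfied by `(c', b)` for some tuple `c'` from `s`. -/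
def FinSatIn (s : Set M) {n m : ℕ} (c : Fin n → M) (b : Fin m → M) : Prop :=
  ∀ φ : (L[[s]]).Formula (Fin n ⊕ Fin m), φ.Realize (Sum.elim c b) →
    ∃ c' : Fin n → M, range c' ⊆ s ∧ φ.Realize (Sum.elim c' b)

/-- Weak dual finite character for an abstract dividing relation `Divides c B A` =
"tp(c/B) divides over A", where the base is (the universe of) an elementary submodel. -/
def HasWeakDFC (Divides : ∀ {n : ℕ}, (Fin n → M) → Set M → Set M → Prop) : Prop :=
  ∀ (N : L.ElementarySubstructure M) {n m : ℕ} (c : Fin n → M) (b : Fin m → M),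
    Divides c ((N : Set M) ∪ range b) (N : Set M) →
    ∃ φ : (L[[(N : Set M)]]).Formula (Fin n ⊕ Fin m),
      φ.Realize (Sum.elim c b) ∧
      ∀ b' : Fin m → M, φ.Realize (Sum.elim c b') → ¬ FinSatIn (L := L) (N : Set M) c b'

theorem finSatIn_of_range_subset (N : L.ElementarySubstructure M) {m n : ℕ}
    (c : Fin m → M) (b' : Fin n → M) (hb' : range b' ⊆ (N : Set M)) :
    ∀ χ : (L[[(N : Set M)]]).Formula (Fin m ⊕ Fin n), χ.Realize (Sum.elim c b') →
      ∃ c'' : Fin m → M, range c'' ⊆ (N : Set M) ∧ χ.Realize (Sum.elim c'' b') := by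
  classical
  intro χ hχ
  let θ : L.Formula ((↥(N : Set M)) ⊕ (Fin m ⊕ Fin n)) := BoundedFormula.constantsVarsEquiv χ
  let f : (↥(N : Set M) ⊕ (Fin m ⊕ Fin n)) → ((↥(N : Set M) ⊕ Fin n) ⊕ Fin m) :=
    Sum.elim (fun a => Sum.inl (Sum.inl a))
      (Sum.elim (fun i => Sum.inr i) (fun j => Sum.inl (Sum.inr j)))
  let ρ : L.Formula (↥(N : Set M) ⊕ Fin n) := (θ.relabel f).iExs (Fin m)
  have hbmem : ∀ i, b' i ∈ N := fun i => hb' (mem_range_self i)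
  let u : (↥(N : Set M) ⊕ Fin n) → N := Sum.elim (fun a => ⟨a.1, a.2⟩) (fun i => ⟨b' i, hbmem i⟩)
  have hχ' : BoundedFormula.Realize χ (Sum.elim c b') default := hχ
  have h1 : ρ.Realize ((⇑N.subtype) ∘ u) := by
    have hcu : ((⇑N.subtype) ∘ u) = Sum.elim (fun a : ↥(N : Set M) => (a : M)) b' := by
      funext x; cases x <;> rfl
    rw [hcu, Formula.realize_iExs]
    refine ⟨c, ?_⟩
    rw [Formula.realize_relabel, Function.comp_def]
    have he : (fun a => Sum.elim (Sum.elim (fun a : ↥(N : Set M) => (a : M)) b') c (f a))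
        = Sum.elim (fun a : ↥(N : Set M) => ((L.con a : M))) (Sum.elim c b') := by
      funext x
      rcases x with a | (i | j) <;> rfl
    rw [he]
    exact BoundedFormula.realize_constantsVarsEquiv.mpr hχ'
  rw [N.subtype.map_formula] at h1
  rw [Formula.realize_iExs] at h1
  simp only [Formula.realize_relabel, Function.comp_def] at h1
  obtain ⟨c₀, hc₀⟩ := h1
  have h2 := (N.subtype.map_formula θ (fun a => Sum.elim u c₀ (f a))).mpr hc₀
  refine ⟨fun i => (c₀ i : M), ?_, ?_⟩
  · rintro x ⟨i, rfl⟩; exact (c₀ i).2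
  · have he : ((⇑N.subtype) ∘ fun a => Sum.elim u c₀ (f a))
        = Sum.elim (fun a : ↥(N : Set M) => ((L.con a : M)))
            (Sum.elim (fun i => (c₀ i : M)) b') := by
      funext x
      rcases x with a | (i | j) <;> rfl
    rw [he] at h2
    exact BoundedFormula.realize_constantsVarsEquiv.mp h2

/-- if forking has weak dual finite character then `T` is simple.  Simplicity
enters only through the black-box fact (`hfact`, Chernikov's Lemma 6.16): if `T` is not
simple there are a model `M₀` and tuples `b`, `c` with `tp(b/M₀c)` finitely satisfiable in
`M₀` while `tp(c/M₀b)` divides over `M₀`. -/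
theorem weak_dfc_implies_simple
    (Divides : ∀ {n : ℕ}, (Fin n → M) → Set M → Set M → Prop)
    (TSimple : Prop)
    (hfact : ¬ TSimple → ∃ (N : L.ElementarySubstructure M) (n m : ℕ)
      (b : Fin n → M) (c : Fin m → M),
      FinSatIn (L := L) (N : Set M) b c ∧
      Divides c ((N : Set M) ∪ range b) (N : Set M))
    (hwdfc : HasWeakDFC (L := L) (M := M) Divides) :
    TSimple := by
  by_contra hT
  obtain ⟨N, n, m, b, c, hfs, hdiv⟩ := hfact hT
  obtain ⟨φ, hφ, hφ'⟩ := hwdfc N c b hdiv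
  let ψ : (L[[(N : Set M)]]).Formula (Fin n ⊕ Fin m) := φ.relabel Sum.swap
  have hψ : ψ.Realize (Sum.elim b c) := by
    rw [Formula.realize_relabel]
    have he : (Sum.elim b c ∘ Sum.swap) = Sum.elim c b := by funext x; cases x <;> rfl
    rw [he]; exact hφ
  obtain ⟨b', hb'r, hb'ψ⟩ := hfs ψ hψ
  have hφb' : φ.Realize (Sum.elim c b') := by
    rw [Formula.realize_relabel] at hb'ψ
    have he : (Sum.elim b' c ∘ Sum.swap) = Sum.elim c b' := by funext x; cases x <;> rfl
    rwa [he] at hb'ψ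
  exact hφ' b' hφb' (finSatIn_of_range_subset N c b' hb'r)
end

section
/- The following are equivalent for a complete first-order theory T: (1) T is simple; (2) forking has dual finite character; (3) forking has weak dual finite character. -/
universe u v w

open FirstOrder FirstOrder.Language Set

variable {L : FirstOrder.Language.{u, v}} {M : Type w} [L.Structure M]

/-- If `b'` is a tuple from an elementary substructure `N`, then any type over `N ∪ b'`
is finitely satisfiable in `N`. -/
lemma finSatIn_of_range_subset_s7 (N : L.ElementarySubstructure M) {n m : ℕ}
    (c : Fin n → M) (b' : Fin m → M) (hb : range b' ⊆ (N : Set M)) :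
    FinSatIn (L := L) (N : Set M) c b' := by
  intro χ hχ
  let f : (↥(N : Set M) ⊕ (Fin n ⊕ Fin m)) → ((↥(N : Set M) ⊕ Fin m) ⊕ Fin n) :=
    Sum.elim (fun a => Sum.inl (Sum.inl a))
      (Sum.elim (fun i => Sum.inr i) (fun j => Sum.inl (Sum.inr j)))
  let χ' : L.Formula (↥(N : Set M) ⊕ (Fin n ⊕ Fin m)) := BoundedFormula.constantsVarsEquiv χ
  let θ : L.Formula (↥(N : Set M) ⊕ Fin m) := (χ'.relabel f).iExs (Fin n)
  have hcon : (fun a : ↥(N : Set M) => ((L.con a : M))) = fun a : ↥(N : Set M) => (a : M) := by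
    funext a; exact coe_con L _
  have h1 : χ'.Realize (Sum.elim (fun a : ↥(N : Set M) => (a : M)) (Sum.elim c b')) := by
    have h0 : BoundedFormula.Realize χ (Sum.elim c b') default := hχ
    have := (BoundedFormula.realize_constantsVarsEquiv
      (φ := χ) (v := Sum.elim c b') (xs := (default : Fin 0 → M))).mpr h0
    rw [hcon] at this
    exact this
  have h2 : θ.Realize (Sum.elim (fun a : ↥(N : Set M) => (a : M)) b') := by
    rw [Formula.realize_iExs]; simp only [Formula.realize_relabel, Function.comp_def]
    refine ⟨c, ?_⟩
    have heq : (fun a => Sum.elim (Sum.elim (fun a : ↥(N : Set M) => (a : M)) b') c (f a))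
        = Sum.elim (fun a : ↥(N : Set M) => (a : M)) (Sum.elim c b') := by
      funext x; rcases x with a | (i | j) <;> rfl
    rw [heq]; exact h1
  let w : ↥(N : Set M) ⊕ Fin m → N :=
    Sum.elim (fun a => a) (fun i => ⟨b' i, hb (mem_range_self i)⟩)
  have hw : ((fun (x : N) => (x : M)) ∘ w) = Sum.elim (fun a : ↥(N : Set M) => (a : M)) b' := by
    funext x; rcases x with a | i <;> rfl
  have h3 : θ.Realize w := by
    rw [← N.subtype.map_formula θ w]
    show θ.Realize ((fun (x : N) => (x : M)) ∘ w)
    rw [hw]; exact h2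
  rw [Formula.realize_iExs] at h3; simp only [Formula.realize_relabel, Function.comp_def] at h3
  obtain ⟨xs, hxs⟩ := h3
  have h5 : χ'.Realize ((fun (x : N) => (x : M)) ∘ (fun a => Sum.elim w xs (f a))) :=
    (N.subtype.map_formula χ' _).mpr hxs
  have heq : ((fun (x : N) => (x : M)) ∘ (fun a => Sum.elim w xs (f a)))
      = Sum.elim (fun a : ↥(N : Set M) => (a : M)) (Sum.elim (fun i => (xs i : M)) b') := by
    funext x; rcases x with a | (i | j) <;> rfl
  rw [heq] at h5
  refine ⟨fun i => (xs i : M), ?_, ?_⟩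
  · rintro _ ⟨i, rfl⟩; exact (xs i).2
  · have := (BoundedFormula.realize_constantsVarsEquiv
      (φ := χ) (v := Sum.elim (fun i => (xs i : M)) b') (xs := (default : Fin 0 → M))).mp
    apply this
    rw [hcon]
    exact h5

/-- for a complete first-order theory the following are equivalent:
(1) `T` is simple, (2) forking has DFC, (3) forking has weak DFC.  Simplicity is taken
(per Kim's theorem) to be equivalent to symmetry of forking (`hsimple_iff_sym`); the other
standard facts used are: forking is witnessed by formulas, dividing implies forking,
finite satisfiability in a model implies nonforking over it, and Chernikov's failure of
symmetry for non-simple theories (`hfact`). -/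
theorem simple_iff_dfc_iff_weak_dfc
    (Forks Divides : ∀ {n : ℕ}, (Fin n → M) → Set M → Set M → Prop)
    (TSimple : Prop)
    (hsimple_iff_sym : TSimple ↔
      ∀ (A : Set M) {n m : ℕ} (c : Fin n → M) (b : Fin m → M),
        Forks c (A ∪ range b) A ↔ Forks b (A ∪ range c) A)
    (hwitness : ∀ (A : Set M) {m n : ℕ} (b : Fin m → M) (c : Fin n → M),
      Forks b (A ∪ range c) A →
      ∃ ψ : (L[[A]]).Formula (Fin m ⊕ Fin n),
        ψ.Realize (Sum.elim b c) ∧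
        ∀ b' : Fin m → M, ψ.Realize (Sum.elim b' c) → Forks b' (A ∪ range c) A)
    (hdiv_fork : ∀ {n : ℕ} (c : Fin n → M) (B A : Set M), Divides c B A → Forks c B A)
    (hfinsat_nofork : ∀ (N : L.ElementarySubstructure M) {n m : ℕ}
      (c : Fin n → M) (b : Fin m → M),
      FinSatIn (L := L) (N : Set M) c b →
      ¬ Forks c ((N : Set M) ∪ range b) (N : Set M))
    (hfact : ¬ TSimple → ∃ (N : L.ElementarySubstructure M) (n m : ℕ)
      (b : Fin n → M) (c : Fin m → M),
      FinSatIn (L := L) (N : Set M) b c ∧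
      Divides c ((N : Set M) ∪ range b) (N : Set M)) :
    (TSimple ↔ HasDFC (L := L) (M := M) Forks) ∧
    (TSimple ↔ HasWeakDFC (L := L) (M := M) Divides) := by
  have swap_realize : ∀ {n m : ℕ} {A : Set M} (ψ : (L[[A]]).Formula (Fin m ⊕ Fin n))
      (c : Fin n → M) (b : Fin m → M),
      (ψ.relabel (Sum.elim Sum.inr Sum.inl)).Realize (Sum.elim c b) ↔
        ψ.Realize (Sum.elim b c) := by
    intro n m A ψ c b
    rw [Formula.realize_relabel]
    have heq : (Sum.elim c b ∘ Sum.elim Sum.inr Sum.inl : Fin m ⊕ Fin n → M) = Sum.elim b c := by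
      funext x; rcases x with i | j <;> rfl
    rw [heq]
  have hS_dfc : TSimple → HasDFC (L := L) (M := M) Forks := by
    intro hS A n m c b hforks
    have hsym := hsimple_iff_sym.mp hS
    obtain ⟨ψ, hψ, hψ'⟩ := hwitness A b c ((hsym A c b).mp hforks)
    refine ⟨ψ.relabel (Sum.elim Sum.inr Sum.inl), (swap_realize ψ c b).mpr hψ, ?_⟩
    intro b' hb'
    exact (hsym A c b').mpr (hψ' b' ((swap_realize ψ c b').mp hb'))
  have hS_wdfc : TSimple → HasWeakDFC (L := L) (M := M) Divides := by
    intro hS N n m c b hdiv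
    have hsym := hsimple_iff_sym.mp hS
    obtain ⟨ψ, hψ, hψ'⟩ := hwitness (N : Set M) b c
      ((hsym (N : Set M) c b).mp (hdiv_fork c _ _ hdiv))
    refine ⟨ψ.relabel (Sum.elim Sum.inr Sum.inl), (swap_realize ψ c b).mpr hψ, ?_⟩
    intro b' hb' hfs
    exact hfinsat_nofork N c b' hfs
      ((hsym (N : Set M) c b').mpr (hψ' b' ((swap_realize ψ c b').mp hb')))
  have hdfc_S : HasDFC (L := L) (M := M) Forks → TSimple := by
    intro hdfc
    by_contra hns
    obtain ⟨N, n, m, b, c, hfs, hdiv⟩ := hfact hns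
    obtain ⟨φ, hφ, hφ'⟩ := hdfc (N : Set M) c b (hdiv_fork c _ _ hdiv)
    obtain ⟨b'', hb''sub, hb''⟩ := hfs (φ.relabel (Sum.elim Sum.inr Sum.inl))
      ((swap_realize φ b c).mpr hφ)
    exact hfinsat_nofork N c b'' (finSatIn_of_range_subset_s7 N c b'' hb''sub)
      (hφ' b'' ((swap_realize φ b'' c).mp hb''))
  have hwdfc_S : HasWeakDFC (L := L) (M := M) Divides → TSimple := by
    intro hwdfc
    by_contra hns
    obtain ⟨N, n, m, b, c, hfs, hdiv⟩ := hfact hns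
    obtain ⟨φ, hφ, hφ'⟩ := hwdfc N c b hdiv
    obtain ⟨b'', hb''sub, hb''⟩ := hfs (φ.relabel (Sum.elim Sum.inr Sum.inl))
      ((swap_realize φ b c).mpr hφ)
    exact hφ' b'' ((swap_realize φ b'' c).mp hb'')
      (finSatIn_of_range_subset_s7 N c b'' hb''sub)
  exact ⟨⟨hS_dfc, hdfc_S⟩, ⟨hS_wdfc, hwdfc_S⟩⟩
end
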